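/- (Theorem 3.1, backward part.) Assume (A1). Then for all integers 0 ≤ m ≤ k, all observation sequences y₀,…,yₙ ∈ Y, every initial probability measure ν and all probability measures ν₁, ν₂ on 𝒳, the composed backward smoothing kernels satisfy ‖ν₁ B_{ν,k|n} B_{ν,k−1|n} ⋯ B_{ν,m|n} − ν₂ B_{ν,k|n} B_{ν,k−1|n} ⋯ B_{ν,m|n}‖_TV ≤ ρ^{k−m+1}, where ρ = 1 − σ₋/σ₊. -/

import Mathlib

/- Theorem 3.1 (backward part) of Olsson, Cappé, Douc, Moulines:
geometric forgetting of the composed backward smoothing kernels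
`B_{ν,k|n} B_{ν,k−1|n} ⋯ B_{ν,m|n}` under assumption (A1), the total variation
distance being `sup_A |ν₁K(A) − ν₂K(A)|` as in the paper. -/

open MeasureTheory
open scoped Classical

noncomputable section

variable {X : Type*} [MeasurableSpace X] {Y : Type*}

/-- Unnormalized filter measures: `ufilter … k` is the unnormalized filtering
measure at time `k` (the time-`k` marginal of the unnormalized joint smoothing
distribution `φ_{ν,0:k|k}`). -/
def ufilter (μ : Measure X) (q : X → X → ℝ) (g : X → Y → ℝ) (ys : ℕ → Y) (ν : Measure X) :
    ℕ → Measure X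
  | 0 => ν.withDensity fun x => ENNReal.ofReal (g x (ys 0))
  | k + 1 =>
      μ.withDensity fun x' =>
        ENNReal.ofReal (g x' (ys (k + 1))) *
          ∫⁻ x, ENNReal.ofReal (q x x') ∂(ufilter μ q g ys ν k)

/-- The filter distribution `φ_{ν,k}`, i.e. the time-`k` marginal of the joint
smoothing distribution `φ_{ν,0:k|k}`. -/
def filterDist (μ : Measure X) (q : X → X → ℝ) (g : X → Y → ℝ) (ys : ℕ → Y) (ν : Measure X)
    (k : ℕ) : Measure X :=
  (ufilter μ q g ys ν k Set.univ)⁻¹ • ufilter μ q g ys ν k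

/-- `qpowAux μ q m` is the density `q^{m+1}` (w.r.t. `μ`) of the `(m+1)`-step
transition kernel built from `q`. -/
def qpowAux (μ : Measure X) (q : X → X → ℝ) : ℕ → X → X → ℝ
  | 0 => q
  | m + 1 => fun x x'' => ∫ x', q x x' * qpowAux μ q m x' x'' ∂μ

/-- The backward smoothing kernel `B_{ν,k|n}(x', ·)`:
for `0 ≤ k ≤ n`, `B_{ν,k|n}(x', A) = ∫_A q(x_k, x') φ_{ν,k}(dx_k) / ∫ q(·, x') dφ_{ν,k}`;
for `k > n` it is given by the `q^{k−n}`-extension of the filter as in the paper. -/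
def Bker (μ : Measure X) (q : X → X → ℝ) (g : X → Y → ℝ) (ys : ℕ → Y) (ν : Measure X)
    (n k : ℕ) (x' : X) : Measure X :=
  if k ≤ n then
    (filterDist μ q g ys ν k).withDensity fun xk =>
      ENNReal.ofReal (q xk x' / ∫ z, q z x' ∂(filterDist μ q g ys ν k))
  else
    μ.withDensity fun xk =>
      ENNReal.ofReal
        ((q xk x' * ∫ xn, qpowAux μ q (k - n - 1) xn xk ∂(filterDist μ q g ys ν n)) /
          ∫ xn, qpowAux μ q (k - n) xn x' ∂(filterDist μ q g ys ν n))

/-- `kcompDown K k ν j = ν K_k K_{k-1} ⋯ K_{k-j}` (successive application of the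
kernels with decreasing index, as appropriate for the time-reversed chain). -/
def kcompDown (K : ℕ → X → Measure X) (k : ℕ) (ν : Measure X) : ℕ → Measure X
  | 0 => ν.bind (K k)
  | j + 1 => (kcompDown K k ν j).bind (K (k - j - 1))



/-! ### Auxiliary lemmas -/

lemma integrable_of_bounds {f : X → ℝ} (μ : Measure X) [IsFiniteMeasure μ]
    (hf : Measurable f) (a b : ℝ) (h1 : ∀ x, a ≤ f x) (h2 : ∀ x, f x ≤ b) :
    Integrable f μ := by
  refine Integrable.mono' (integrable_const (max |a| |b|)) hf.aestronglyMeasurable ?_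
  filter_upwards with x
  rw [Real.norm_eq_abs, abs_le]
  constructor
  · exact le_trans (neg_le_neg (le_max_left |a| |b|)) (le_trans (neg_abs_le a) (h1 x))
  · exact le_trans (h2 x) (le_trans (le_abs_self b) (le_max_right |a| |b|))


/-- Layer-cake comparison: if the measures of all sets differ by at most `c`,
then integrals of `[0,M]`-valued functions differ by at most `M*c`. -/
lemma integral_le_of_meas_diff (α β : Measure X) [IsFiniteMeasure α] [IsFiniteMeasure β]
    {G : X → ℝ} (hG : Measurable G) {M : ℝ} (hM : 0 ≤ M)
    (h0 : ∀ x, 0 ≤ G x) (h1 : ∀ x, G x ≤ M)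
    {c : ℝ} (hc : 0 ≤ c)
    (h : ∀ A : Set X, MeasurableSet A → (α A).toReal ≤ (β A).toReal + c) :
    ∫ x, G x ∂α ≤ (∫ x, G x ∂β) + M * c := by
  have hGn : (0:X→ℝ) ≤ᶠ[ae α] G := Filter.Eventually.of_forall h0
  have hGnβ : (0:X→ℝ) ≤ᶠ[ae β] G := Filter.Eventually.of_forall h0
  have hαi : ∫ x, G x ∂α = (∫⁻ x, ENNReal.ofReal (G x) ∂α).toReal :=
    integral_eq_lintegral_of_nonneg_ae hGn hG.aestronglyMeasurable
  have hβi : ∫ x, G x ∂β = (∫⁻ x, ENNReal.ofReal (G x) ∂β).toReal :=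
    integral_eq_lintegral_of_nonneg_ae hGnβ hG.aestronglyMeasurable
  have hlayα : ∫⁻ x, ENNReal.ofReal (G x) ∂α = ∫⁻ t in Set.Ioi 0, α {a | t < G a} :=
    lintegral_eq_lintegral_meas_lt α hGn hG.aemeasurable
  have hlayβ : ∫⁻ x, ENNReal.ofReal (G x) ∂β = ∫⁻ t in Set.Ioi 0, β {a | t < G a} :=
    lintegral_eq_lintegral_meas_lt β hGnβ hG.aemeasurable
  -- integrand vanishes for t > M
  have hvan : ∀ (γ : Measure X), ∫⁻ t in Set.Ioi M, γ {a | t < G a} = 0 := by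
    intro γ
    have : ∀ t ∈ Set.Ioi M, γ {a | t < G a} = 0 := by
      intro t ht
      have : {a | t < G a} = ∅ := by
        ext a; simp only [Set.mem_setOf_eq, Set.mem_empty_iff_false, iff_false, not_lt]
        exact le_trans (h1 a) (le_of_lt ht)
      simp [this]
    calc ∫⁻ t in Set.Ioi M, γ {a | t < G a}
        = ∫⁻ _ in Set.Ioi M, 0 := by
          refine setLIntegral_congr_fun measurableSet_Ioi ?_
          exact fun t ht => this t ht
      _ = 0 := by simp
  have hsplit : ∀ (γ : Measure X), ∫⁻ t in Set.Ioi 0, γ {a | t < G a}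
      = ∫⁻ t in Set.Ioc 0 M, γ {a | t < G a} := by
    intro γ
    rw [← Set.Ioc_union_Ioi_eq_Ioi hM,
      Measure.restrict_union (Set.Ioc_disjoint_Ioi le_rfl) measurableSet_Ioi,
      lintegral_add_measure, hvan, add_zero]
  have key : ∫⁻ t in Set.Ioi 0, α {a | t < G a}
      ≤ (∫⁻ t in Set.Ioi 0, β {a | t < G a}) + ENNReal.ofReal M * ENNReal.ofReal c := by
    rw [hsplit α]
    have hpt : ∀ t, α {a | t < G a} ≤ β {a | t < G a} + ENNReal.ofReal c := by
      intro t
      have hmeas : MeasurableSet {a | t < G a} := measurableSet_lt measurable_const hG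
      have := h _ hmeas
      calc α {a | t < G a} = ENNReal.ofReal ((α {a | t < G a}).toReal) :=
            (ENNReal.ofReal_toReal (measure_ne_top _ _)).symm
        _ ≤ ENNReal.ofReal ((β {a | t < G a}).toReal + c) := ENNReal.ofReal_le_ofReal this
        _ ≤ ENNReal.ofReal ((β {a | t < G a}).toReal) + ENNReal.ofReal c :=
            ENNReal.ofReal_add_le
        _ = β {a | t < G a} + ENNReal.ofReal c := by
            rw [ENNReal.ofReal_toReal (measure_ne_top _ _)]
    calc ∫⁻ t in Set.Ioc 0 M, α {a | t < G a}
        ≤ ∫⁻ t in Set.Ioc 0 M, (β {a | t < G a} + ENNReal.ofReal c) :=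
          lintegral_mono fun t => hpt t
      _ = (∫⁻ t in Set.Ioc 0 M, β {a | t < G a}) + ENNReal.ofReal c * volume (Set.Ioc (0:ℝ) M) := by
          rw [lintegral_add_right _ measurable_const, setLIntegral_const]
      _ ≤ (∫⁻ t in Set.Ioi 0, β {a | t < G a}) + ENNReal.ofReal M * ENNReal.ofReal c := by
          refine add_le_add (lintegral_mono_set Set.Ioc_subset_Ioi_self) ?_
          rw [Real.volume_Ioc, sub_zero, mul_comm]
  -- convert back to reals
  have hβfin : (∫⁻ t in Set.Ioi 0, β {a | t < G a}) ≠ ⊤ := by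
    rw [← hlayβ]
    have : ∫⁻ x, ENNReal.ofReal (G x) ∂β ≤ ENNReal.ofReal M * β Set.univ := by
      rw [← lintegral_const]
      exact lintegral_mono fun x => ENNReal.ofReal_le_ofReal (h1 x)
    exact ne_top_of_le_ne_top (ENNReal.mul_ne_top ENNReal.ofReal_ne_top (measure_ne_top _ _)) this
  rw [hαi, hβi, hlayα, hlayβ]
  have := ENNReal.toReal_mono (by
      exact ENNReal.add_ne_top.mpr ⟨hβfin, ENNReal.mul_ne_top ENNReal.ofReal_ne_top ENNReal.ofReal_ne_top⟩) key
  rw [ENNReal.toReal_add hβfin (ENNReal.mul_ne_top ENNReal.ofReal_ne_top ENNReal.ofReal_ne_top),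
    ENNReal.toReal_mul, ENNReal.toReal_ofReal hM, ENNReal.toReal_ofReal hc] at this
  exact this
lemma isProb_bind (ν : Measure X) [IsProbabilityMeasure ν] {K : X → Measure X}
    (hK : Measurable K) (h : ∀ x, IsProbabilityMeasure (K x)) :
    IsProbabilityMeasure (ν.bind K) := by
  constructor
  rw [Measure.bind_apply MeasurableSet.univ hK.aemeasurable]
  have : ∀ x, (K x) Set.univ = 1 := fun x => (h x).measure_univ
  simp [this]


/-- One-step Doeblin contraction. -/
lemma tv_step {K : X → Measure X} (hK : Measurable K)
    (hKp : ∀ x, IsProbabilityMeasure (K x))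
    (lam : Measure X) [IsProbabilityMeasure lam] {ε : ℝ} (hε0 : 0 ≤ ε) (hε1 : ε ≤ 1)
    (hmin : ∀ x (A : Set X), MeasurableSet A → ENNReal.ofReal ε * lam A ≤ K x A)
    (α β : Measure X) [IsProbabilityMeasure α] [IsProbabilityMeasure β]
    {c : ℝ} (hc : 0 ≤ c)
    (h : ∀ A : Set X, MeasurableSet A → |(α A).toReal - (β A).toReal| ≤ c)
    (A : Set X) (hA : MeasurableSet A) :
    |((α.bind K) A).toReal - ((β.bind K) A).toReal| ≤ (1 - ε) * c := by
  have hKA : Measurable fun x => K x A := (Measure.measurable_coe hA).comp hK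
  have htmin : ∀ x (S : Set X), MeasurableSet S → ε * (lam S).toReal ≤ ((K x) S).toReal := by
    intro x S hS
    have h2 : (ENNReal.ofReal ε * lam S).toReal ≤ ((K x) S).toReal :=
      ENNReal.toReal_mono (measure_ne_top _ _) (hmin x S hS)
    rwa [ENNReal.toReal_mul, ENNReal.toReal_ofReal hε0] at h2
  set G : X → ℝ := fun x => ((K x) A).toReal - ε * (lam A).toReal with hGdef
  have hGmeas : Measurable G := (ENNReal.measurable_toReal.comp hKA).sub measurable_const
  have hcompl : ∀ x, ((K x) A).toReal + ((K x) Aᶜ).toReal = 1 := by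
    intro x
    haveI := hKp x
    have := measure_add_measure_compl (μ := K x) hA
    have h2 : (((K x) A) + ((K x) Aᶜ)).toReal = (1 : ENNReal).toReal := by rw [this, measure_univ]
    rwa [ENNReal.toReal_add (measure_ne_top _ _) (measure_ne_top _ _), ENNReal.toReal_one] at h2
  have hlamcompl : (lam A).toReal + (lam Aᶜ).toReal = 1 := by
    have := measure_add_measure_compl (μ := lam) hA
    have h2 : ((lam A) + (lam Aᶜ)).toReal = (1 : ENNReal).toReal := by rw [this, measure_univ]
    rwa [ENNReal.toReal_add (measure_ne_top _ _) (measure_ne_top _ _), ENNReal.toReal_one] at h2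
  have hG0 : ∀ x, 0 ≤ G x := by
    intro x
    have := htmin x A hA
    simp only [hGdef]
    linarith
  have hG1 : ∀ x, G x ≤ 1 - ε := by
    intro x
    have h1 := htmin x Aᶜ hA.compl
    have h2 := hcompl x
    have h3 : ε * (lam Aᶜ).toReal = ε - ε * (lam A).toReal := by
      have : (lam Aᶜ).toReal = 1 - (lam A).toReal := by linarith
      rw [this]; ring
    simp only [hGdef]
    linarith
  have hbind : ∀ (γ : Measure X), ((γ.bind K) A).toReal = ∫ x, ((K x) A).toReal ∂γ := by
    intro γ
    rw [Measure.bind_apply hA hK.aemeasurable]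
    exact (integral_toReal hKA.aemeasurable (ae_of_all _ fun x => measure_lt_top _ _)).symm
  have hKAint : ∀ (γ : Measure X), IsFiniteMeasure γ → Integrable (fun x => ((K x) A).toReal) γ := by
    intro γ hγ
    exact integrable_of_bounds γ (ENNReal.measurable_toReal.comp hKA) 0 1
      (fun x => ENNReal.toReal_nonneg)
      (fun x => by
        haveI := hKp x
        exact ENNReal.toReal_le_of_le_ofReal zero_le_one (by simpa using prob_le_one))
  have hGint : ∀ (γ : Measure X), IsProbabilityMeasure γ → ∫ x, G x ∂γ
      = (∫ x, ((K x) A).toReal ∂γ) - ε * (lam A).toReal := by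
    intro γ hγ
    simp only [hGdef]
    rw [integral_sub (hKAint γ inferInstance) (integrable_const _), integral_const]
    simp [measure_univ]
  have heq : ((α.bind K) A).toReal - ((β.bind K) A).toReal = (∫ x, G x ∂α) - ∫ x, G x ∂β := by
    rw [hbind α, hbind β, hGint α inferInstance, hGint β inferInstance]
    ring
  rw [heq, abs_sub_le_iff]
  have hM : (0:ℝ) ≤ 1 - ε := by linarith
  constructor
  · have := integral_le_of_meas_diff α β hGmeas hM hG0 hG1 hc
      (fun S hS => by have := (abs_sub_le_iff.mp (h S hS)).1; linarith)
    linarith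
  · have := integral_le_of_meas_diff β α hGmeas hM hG0 hG1 hc
      (fun S hS => by have := (abs_sub_le_iff.mp (h S hS)).2; linarith)
    linarith


lemma kcompDown_prob (K : ℕ → X → Measure X) (hK : ∀ i, Measurable (K i))
    (hKp : ∀ i x, IsProbabilityMeasure (K i x)) (k : ℕ)
    (ν : Measure X) [IsProbabilityMeasure ν] :
    ∀ j, IsProbabilityMeasure (kcompDown K k ν j) := by
  intro j
  induction j with
  | zero => exact isProb_bind ν (hK k) (hKp k)
  | succ j ih =>
    haveI := ih
    exact isProb_bind _ (hK (k - j - 1)) (hKp (k - j - 1))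

/-- Iterated Doeblin contraction for the composed kernels. -/
lemma tv_chain (K : ℕ → X → Measure X) (hK : ∀ i, Measurable (K i))
    (hKp : ∀ i x, IsProbabilityMeasure (K i x))
    (lam : ℕ → Measure X) (hlam : ∀ i, IsProbabilityMeasure (lam i))
    {ε : ℝ} (hε0 : 0 ≤ ε) (hε1 : ε ≤ 1)
    (hmin : ∀ i x (A : Set X), MeasurableSet A → ENNReal.ofReal ε * lam i A ≤ K i x A)
    (k : ℕ) (ν₁ ν₂ : Measure X) [IsProbabilityMeasure ν₁] [IsProbabilityMeasure ν₂] :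
    ∀ j (A : Set X), MeasurableSet A →
      |(kcompDown K k ν₁ j A).toReal - (kcompDown K k ν₂ j A).toReal| ≤ (1 - ε) ^ (j + 1) := by
  have htriv : ∀ (γ : Measure X), IsProbabilityMeasure γ → ∀ (A : Set X), (γ A).toReal ≤ 1 := by
    intro γ hγ A
    exact ENNReal.toReal_le_of_le_ofReal zero_le_one (by simpa using prob_le_one)
  intro j
  induction j with
  | zero =>
    intro A hA
    haveI := hlam k
    have := tv_step (hK k) (hKp k) (lam k) hε0 hε1 (hmin k) ν₁ ν₂ (zero_le_one)
      (fun S hS => by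
        rw [abs_sub_le_iff]
        constructor
        · have := htriv ν₁ inferInstance S
          have := ENNReal.toReal_nonneg (a := ν₂ S)
          linarith
        · have := htriv ν₂ inferInstance S
          have := ENNReal.toReal_nonneg (a := ν₁ S)
          linarith) A hA
    simpa [kcompDown] using this
  | succ j ih =>
    intro A hA
    haveI := kcompDown_prob K hK hKp k ν₁ j
    haveI := kcompDown_prob K hK hKp k ν₂ j
    haveI := hlam (k - j - 1)
    have hcpos : (0:ℝ) ≤ (1 - ε) ^ (j + 1) := pow_nonneg (by linarith) _
    have := tv_step (hK (k - j - 1)) (hKp (k - j - 1)) (lam (k - j - 1)) hε0 hε1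
      (hmin (k - j - 1)) (kcompDown K k ν₁ j) (kcompDown K k ν₂ j) hcpos
      (fun S hS => ih S hS) A hA
    calc |(kcompDown K k ν₁ (j+1) A).toReal - (kcompDown K k ν₂ (j+1) A).toReal|
        ≤ (1 - ε) * (1 - ε) ^ (j + 1) := this
      _ = (1 - ε) ^ (j + 1 + 1) := by ring
/-- measurability of a withDensity kernel with jointly measurable density -/
lemma measurable_withDensity_kernel (base : Measure X) [SFinite base]
    {d : X → X → ENNReal} (hd : Measurable (Function.uncurry d)) :
    Measurable fun x' => base.withDensity (d x') := by
  apply Measure.measurable_of_measurable_coe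
  intro A hA
  have h1 : (fun x' => base.withDensity (d x') A)
      = fun x' => ∫⁻ z, A.indicator (d x') z ∂base := by
    funext x'
    rw [withDensity_apply _ hA, lintegral_indicator hA]
  rw [h1]
  apply Measurable.lintegral_prod_right (f := fun x' z => A.indicator (d x') z)
  have : (Function.uncurry fun x' z => A.indicator (d x') z)
      = fun p : X × X => if p.2 ∈ A then d p.1 p.2 else 0 := by
    funext p
    simp [Function.uncurry, Set.indicator_apply]
  rw [this]
  exact Measurable.ite (measurable_snd hA) hd measurable_const


lemma mul_mem_bounds {a b c d x y : ℝ} (ha : 0 < a) (hc : 0 < c)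
    (h1 : a ≤ x) (h2 : x ≤ b) (h3 : c ≤ y) (h4 : y ≤ d) :
    a * c ≤ x * y ∧ x * y ≤ b * d :=
  ⟨mul_le_mul h1 h3 hc.le (ha.le.trans h1),
   mul_le_mul h2 h4 (hc.le.trans h3) ((ha.le.trans h1).trans h2)⟩


section qpow
variable (μ : Measure X) [IsProbabilityMeasure μ] {q : X → X → ℝ}
  {σm σp : ℝ}

lemma qpow_meas (hq : Measurable (Function.uncurry q)) :
    ∀ j, Measurable (Function.uncurry (qpowAux μ q j)) := by
  intro j
  induction j with
  | zero => exact hq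
  | succ j ih =>
    have heq : Function.uncurry (qpowAux μ q (j+1))
        = fun p : X × X => ∫ x', q p.1 x' * qpowAux μ q j x' p.2 ∂μ := rfl
    rw [heq]
    have hm : StronglyMeasurable (Function.uncurry (fun (p : X × X) (x' : X) =>
        q p.1 x' * qpowAux μ q j x' p.2)) := by
      apply Measurable.stronglyMeasurable
      have h1 : Measurable fun w : (X × X) × X => q w.1.1 w.2 :=
        hq.comp ((measurable_fst.comp measurable_fst).prodMk measurable_snd)
      have h2 : Measurable fun w : (X × X) × X => qpowAux μ q j w.2 w.1.2 :=
        ih.comp (measurable_snd.prodMk (measurable_snd.comp measurable_fst))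
      exact h1.mul h2
    exact hm.integral_prod_right.measurable

lemma qpow_bounds (hq : Measurable (Function.uncurry q)) (hσm : 0 < σm)
    (hq_low : ∀ a b, σm ≤ q a b) (hq_up : ∀ a b, q a b ≤ σp) :
    ∀ j x x'', σm ^ (j+1) ≤ qpowAux μ q j x x'' ∧ qpowAux μ q j x x'' ≤ σp ^ (j+1) := by
  intro j
  induction j with
  | zero => intro x x''; simpa using ⟨hq_low x x'', hq_up x x''⟩
  | succ j ih =>
    intro x x''
    have hσmj : 0 < σm ^ (j+1) := pow_pos hσm _
    have hb : ∀ x', σm ^ (j+2) ≤ q x x' * qpowAux μ q j x' x''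
        ∧ q x x' * qpowAux μ q j x' x'' ≤ σp ^ (j+2) := by
      intro x'
      have := mul_mem_bounds hσm hσmj (hq_low x x') (hq_up x x')
        (ih x' x'').1 (ih x' x'').2
      constructor
      · calc σm ^ (j+2) = σm * σm ^ (j+1) := by ring
          _ ≤ _ := this.1
      · calc q x x' * qpowAux μ q j x' x'' ≤ σp * σp ^ (j+1) := this.2
          _ = σp ^ (j+2) := by ring
    have hmeas : Measurable fun x' => q x x' * qpowAux μ q j x' x'' :=
      (hq.comp measurable_prodMk_left).mul
        ((qpow_meas μ hq j).comp (measurable_id.prodMk measurable_const))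
    have hint : Integrable (fun x' => q x x' * qpowAux μ q j x' x'') μ :=
      integrable_of_bounds μ hmeas (σm ^ (j+2)) (σp ^ (j+2))
        (fun x' => (hb x').1) (fun x' => (hb x').2)
    constructor
    · have : ∫ _x' : X, σm ^ (j+2) ∂μ ≤ ∫ x', q x x' * qpowAux μ q j x' x'' ∂μ :=
        integral_mono (integrable_const _) hint fun x' => (hb x').1
      show σm ^ (j+2) ≤ ∫ x', q x x' * qpowAux μ q j x' x'' ∂μ
      simpa [measure_univ] using this
    · have : ∫ x', q x x' * qpowAux μ q j x' x'' ∂μ ≤ ∫ _x' : X, σp ^ (j+2) ∂μ :=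
        integral_mono hint (integrable_const _) fun x' => (hb x').2
      show ∫ x', q x x' * qpowAux μ q j x' x'' ∂μ ≤ σp ^ (j+2)
      simpa [measure_univ] using this

lemma qpow_right (hq : Measurable (Function.uncurry q)) (hσm : 0 < σm)
    (hq_low : ∀ a b, σm ≤ q a b) (hq_up : ∀ a b, q a b ≤ σp) :
    ∀ j x x'', qpowAux μ q (j+1) x x'' = ∫ z, qpowAux μ q j x z * q z x'' ∂μ := by
  intro j
  induction j with
  | zero =>
    intro x x''
    show (∫ x', q x x' * qpowAux μ q 0 x' x'' ∂μ) = _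
    simp only [qpowAux]
  | succ j ih =>
    intro x x''
    have hσp : 0 < σp := hσm.trans_le ((hq_low x x).trans (hq_up x x))
    show (∫ x', q x x' * qpowAux μ q (j+1) x' x'' ∂μ) = _
    have step1 : (∫ x', q x x' * qpowAux μ q (j+1) x' x'' ∂μ)
        = ∫ x', ∫ z, q x x' * (qpowAux μ q j x' z * q z x'') ∂μ ∂μ := by
      congr 1
      funext x'
      rw [ih x' x'', ← integral_const_mul]
    rw [step1]
    have hmeasu : Measurable (Function.uncurry
        (fun (x' z : X) => q x x' * (qpowAux μ q j x' z * q z x''))) := by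
      have h1 : Measurable fun p : X × X => q x p.1 :=
        (hq.comp measurable_prodMk_left).comp measurable_fst
      have h2 : Measurable fun p : X × X => qpowAux μ q j p.1 p.2 := qpow_meas μ hq j
      have h3 : Measurable fun p : X × X => q p.2 x'' :=
        (hq.comp (measurable_id.prodMk measurable_const)).comp measurable_snd
      exact h1.mul (h2.mul h3)
    have hbnd : ∀ p : X × X, σm * (σm ^ (j+1) * σm) ≤ q x p.1 * (qpowAux μ q j p.1 p.2 * q p.2 x'')
        ∧ q x p.1 * (qpowAux μ q j p.1 p.2 * q p.2 x'') ≤ σp * (σp ^ (j+1) * σp) := by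
      intro p
      have hin := mul_mem_bounds (pow_pos hσm (j+1)) hσm
        (qpow_bounds μ hq hσm hq_low hq_up j p.1 p.2).1
        (qpow_bounds μ hq hσm hq_low hq_up j p.1 p.2).2
        (hq_low p.2 x'') (hq_up p.2 x'')
      exact mul_mem_bounds hσm (mul_pos (pow_pos hσm (j+1)) hσm)
        (hq_low x p.1) (hq_up x p.1) hin.1 hin.2
    have hintu : Integrable (Function.uncurry
        (fun (x' z : X) => q x x' * (qpowAux μ q j x' z * q z x''))) (μ.prod μ) :=
      integrable_of_bounds (μ.prod μ) hmeasu _ _ (fun p => (hbnd p).1) (fun p => (hbnd p).2)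
    rw [integral_integral_swap hintu]
    congr 1
    funext z
    calc (∫ x', q x x' * (qpowAux μ q j x' z * q z x'') ∂μ)
        = ∫ x', (q x x' * qpowAux μ q j x' z) * q z x'' ∂μ := by
          congr 1; funext x'; ring
      _ = (∫ x', q x x' * qpowAux μ q j x' z ∂μ) * q z x'' := by
          rw [integral_mul_const]
      _ = qpowAux μ q (j+1) x z * q z x'' := rfl
end qpow

section filter
variable (μ : Measure X) [IsProbabilityMeasure μ] {q : X → X → ℝ} {g : X → Y → ℝ}
  {ys : ℕ → Y} (ν : Measure X) [IsProbabilityMeasure ν] {σm σp : ℝ}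

lemma ufilter_mass (hq : Measurable (Function.uncurry q)) (hσm : 0 < σm)
    (hq_low : ∀ a b, σm ≤ q a b) (hq_up : ∀ a b, q a b ≤ σp)
    (hg_meas : ∀ yv, Measurable fun x => g x yv)
    (hg_nonneg : ∀ x yv, 0 ≤ g x yv)
    (hg_bdd : ∀ yv, ∃ C, ∀ x, g x yv ≤ C)
    (hg_pos : ∀ yv, 0 < ∫ x, g x yv ∂μ)
    (h0 : ufilter μ q g ys ν 0 Set.univ ≠ 0) :
    ∀ k, ufilter μ q g ys ν k Set.univ ≠ 0 ∧ ufilter μ q g ys ν k Set.univ ≠ ⊤ := by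
  have hgint : ∀ yv, Integrable (fun x => g x yv) μ := by
    intro yv
    obtain ⟨C, hC⟩ := hg_bdd yv
    exact integrable_of_bounds μ (hg_meas yv) 0 C (fun x => hg_nonneg x yv) hC
  have hglint : ∀ yv, ∫⁻ x, ENNReal.ofReal (g x yv) ∂μ = ENNReal.ofReal (∫ x, g x yv ∂μ) :=
    fun yv => (ofReal_integral_eq_lintegral_ofReal (hgint yv)
      (Filter.Eventually.of_forall fun x => hg_nonneg x yv)).symm
  intro k
  induction k with
  | zero =>
    refine ⟨h0, ?_⟩
    obtain ⟨C, hC⟩ := hg_bdd (ys 0)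
    have : ufilter μ q g ys ν 0 Set.univ ≤ ENNReal.ofReal C := by
      show (ν.withDensity fun x => ENNReal.ofReal (g x (ys 0))) Set.univ ≤ _
      rw [withDensity_apply _ MeasurableSet.univ, Measure.restrict_univ]
      calc ∫⁻ x, ENNReal.ofReal (g x (ys 0)) ∂ν ≤ ∫⁻ _x, ENNReal.ofReal C ∂ν :=
            lintegral_mono fun x => ENNReal.ofReal_le_ofReal (hC x)
        _ = ENNReal.ofReal C := by simp [measure_univ]
    exact ne_top_of_le_ne_top ENNReal.ofReal_ne_top this
  | succ k ih =>
    obtain ⟨hk0, hktop⟩ := ih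
    obtain ⟨C, hC⟩ := hg_bdd (ys (k+1))
    set M := ufilter μ q g ys ν k Set.univ with hM
    have happ : ufilter μ q g ys ν (k+1) Set.univ
        = ∫⁻ x', ENNReal.ofReal (g x' (ys (k+1)))
            * ∫⁻ x, ENNReal.ofReal (q x x') ∂(ufilter μ q g ys ν k) ∂μ := by
      show (μ.withDensity _) Set.univ = _
      rw [withDensity_apply _ MeasurableSet.univ, Measure.restrict_univ]
    have hLup : ∀ x', (∫⁻ x, ENNReal.ofReal (q x x') ∂(ufilter μ q g ys ν k))
        ≤ ENNReal.ofReal σp * M := by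
      intro x'
      calc (∫⁻ x, ENNReal.ofReal (q x x') ∂(ufilter μ q g ys ν k))
          ≤ ∫⁻ _x, ENNReal.ofReal σp ∂(ufilter μ q g ys ν k) :=
            lintegral_mono fun x => ENNReal.ofReal_le_ofReal (hq_up x x')
        _ = ENNReal.ofReal σp * M := by rw [lintegral_const]
    have hLlow : ∀ x', ENNReal.ofReal σm * M
        ≤ ∫⁻ x, ENNReal.ofReal (q x x') ∂(ufilter μ q g ys ν k) := by
      intro x'
      calc ENNReal.ofReal σm * M = ∫⁻ _x, ENNReal.ofReal σm ∂(ufilter μ q g ys ν k) := by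
            rw [lintegral_const]
        _ ≤ _ := lintegral_mono fun x => ENNReal.ofReal_le_ofReal (hq_low x x')
    constructor
    · rw [happ]
      have hlow : (∫⁻ x', ENNReal.ofReal (g x' (ys (k+1))) ∂μ) * (ENNReal.ofReal σm * M)
          ≤ ∫⁻ x', ENNReal.ofReal (g x' (ys (k+1)))
              * ∫⁻ x, ENNReal.ofReal (q x x') ∂(ufilter μ q g ys ν k) ∂μ := by
        rw [← lintegral_mul_const _ ((hg_meas (ys (k+1))).ennreal_ofReal)]
        exact lintegral_mono fun x' => mul_le_mul_right (hLlow x') _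
      intro hcontr
      rw [hcontr] at hlow
      have h1 : (∫⁻ x', ENNReal.ofReal (g x' (ys (k+1))) ∂μ) ≠ 0 := by
        rw [hglint]
        simpa using ENNReal.ofReal_pos.mpr (hg_pos (ys (k+1)))
      have h2 : ENNReal.ofReal σm ≠ 0 := by simpa using ENNReal.ofReal_pos.mpr hσm
      have := le_antisymm hlow zero_le
      exact (mul_ne_zero h1 (mul_ne_zero h2 hk0)) this
    · rw [happ]
      have hup : (∫⁻ x', ENNReal.ofReal (g x' (ys (k+1)))
              * ∫⁻ x, ENNReal.ofReal (q x x') ∂(ufilter μ q g ys ν k) ∂μ)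
          ≤ ENNReal.ofReal C * (ENNReal.ofReal σp * M) := by
        calc _ ≤ ∫⁻ _x' : X, ENNReal.ofReal C * (ENNReal.ofReal σp * M) ∂μ := by
              refine lintegral_mono fun x' => ?_
              exact mul_le_mul' (ENNReal.ofReal_le_ofReal (hC x')) (hLup x')
          _ = ENNReal.ofReal C * (ENNReal.ofReal σp * M) := by simp [measure_univ]
      exact ne_top_of_le_ne_top (ENNReal.mul_ne_top ENNReal.ofReal_ne_top
        (ENNReal.mul_ne_top ENNReal.ofReal_ne_top hktop)) hup

lemma filter_prob (hq : Measurable (Function.uncurry q)) (hσm : 0 < σm)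
    (hq_low : ∀ a b, σm ≤ q a b) (hq_up : ∀ a b, q a b ≤ σp)
    (hg_meas : ∀ yv, Measurable fun x => g x yv)
    (hg_nonneg : ∀ x yv, 0 ≤ g x yv)
    (hg_bdd : ∀ yv, ∃ C, ∀ x, g x yv ≤ C)
    (hg_pos : ∀ yv, 0 < ∫ x, g x yv ∂μ)
    (h0 : ufilter μ q g ys ν 0 Set.univ ≠ 0) (k : ℕ) :
    IsProbabilityMeasure (filterDist μ q g ys ν k) := by
  obtain ⟨h1, h2⟩ := ufilter_mass μ ν hq hσm hq_low hq_up hg_meas hg_nonneg hg_bdd hg_pos h0 k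
  constructor
  show ((ufilter μ q g ys ν k Set.univ)⁻¹ • ufilter μ q g ys ν k) Set.univ = 1
  rw [Measure.smul_apply, smul_eq_mul, ENNReal.inv_mul_cancel h1 h2]
end filter

section Bprops
variable (μ : Measure X) [IsProbabilityMeasure μ] {q : X → X → ℝ} {g : X → Y → ℝ}
  {ys : ℕ → Y} (ν : Measure X) [IsProbabilityMeasure ν] {σm σp : ℝ} (n : ℕ)

lemma Bker_props (hq : Measurable (Function.uncurry q)) (hσm : 0 < σm)
    (hq_low : ∀ a b, σm ≤ q a b) (hq_up : ∀ a b, q a b ≤ σp)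
    (hg_meas : ∀ yv, Measurable fun x => g x yv)
    (hg_nonneg : ∀ x yv, 0 ≤ g x yv)
    (hg_bdd : ∀ yv, ∃ C, ∀ x, g x yv ≤ C)
    (hg_pos : ∀ yv, 0 < ∫ x, g x yv ∂μ)
    (h0 : ufilter μ q g ys ν 0 Set.univ ≠ 0) (i : ℕ) :
    Measurable (Bker μ q g ys ν n i) ∧ (∀ x, IsProbabilityMeasure (Bker μ q g ys ν n i x)) ∧
    ∃ lam : Measure X, IsProbabilityMeasure lam ∧
      ∀ x (A : Set X), MeasurableSet A →
        ENNReal.ofReal (σm / σp) * lam A ≤ Bker μ q g ys ν n i x A := by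
  have hX : Nonempty X := by
    by_contra h
    rw [not_nonempty_iff] at h
    have h1 : ν Set.univ = 1 := measure_univ
    rw [Set.univ_eq_empty_iff.mpr h] at h1
    simp at h1
  obtain ⟨x0⟩ := hX
  have hσp : 0 < σp := hσm.trans_le ((hq_low x0 x0).trans (hq_up x0 x0))
  have hqsec : ∀ x', Measurable fun z => q z x' :=
    fun x' => hq.comp (measurable_id.prodMk measurable_const)
  have hqsec' : ∀ x, Measurable fun z => q x z := fun x => hq.comp measurable_prodMk_left
  by_cases hin : i ≤ n
  · -- case i ≤ n
    haveI hφ : IsProbabilityMeasure (filterDist μ q g ys ν i) :=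
      filter_prob μ ν hq hσm hq_low hq_up hg_meas hg_nonneg hg_bdd hg_pos h0 i
    have hqint : ∀ x', Integrable (fun z => q z x') (filterDist μ q g ys ν i) :=
      fun x' => integrable_of_bounds _ (hqsec x') σm σp (fun z => hq_low z x') (fun z => hq_up z x')
    have hClow : ∀ x', σm ≤ ∫ z, q z x' ∂(filterDist μ q g ys ν i) := by
      intro x'
      have : ∫ _z : X, σm ∂(filterDist μ q g ys ν i) ≤ ∫ z, q z x' ∂(filterDist μ q g ys ν i) :=
        integral_mono (integrable_const _) (hqint x') fun z => hq_low z x'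
      simpa [measure_univ] using this
    have hCup : ∀ x', (∫ z, q z x' ∂(filterDist μ q g ys ν i)) ≤ σp := by
      intro x'
      have : (∫ z, q z x' ∂(filterDist μ q g ys ν i)) ≤ ∫ _z : X, σp ∂(filterDist μ q g ys ν i) :=
        integral_mono (hqint x') (integrable_const _) fun z => hq_up z x'
      simpa [measure_univ] using this
    have hCpos : ∀ x', 0 < ∫ z, q z x' ∂(filterDist μ q g ys ν i) :=
      fun x' => hσm.trans_le (hClow x')
    have hCmeas : Measurable fun x' => ∫ z, q z x' ∂(filterDist μ q g ys ν i) := by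
      have h1 : Measurable (Function.uncurry fun (x' z : X) => q z x') := hq.comp measurable_swap
      exact h1.stronglyMeasurable.integral_prod_right.measurable
    have hBeq : Bker μ q g ys ν n i = fun x' => (filterDist μ q g ys ν i).withDensity
        fun xk => ENNReal.ofReal (q xk x' / ∫ z, q z x' ∂(filterDist μ q g ys ν i)) := by
      funext x'
      simp only [Bker, if_pos hin]
    have hdlow : ∀ x' z, ENNReal.ofReal (σm / σp)
        ≤ ENNReal.ofReal (q z x' / ∫ z', q z' x' ∂(filterDist μ q g ys ν i)) := by
      intro x' z
      apply ENNReal.ofReal_le_ofReal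
      exact div_le_div₀ (hσm.le.trans (hq_low z x')) (hq_low z x') (hCpos x') (hCup x')
    refine ⟨?_, ?_, ?_⟩
    · rw [hBeq]
      apply measurable_withDensity_kernel
      exact (((hq.comp measurable_swap).div (hCmeas.comp measurable_fst))).ennreal_ofReal
    · intro x'
      constructor
      rw [hBeq]
      rw [withDensity_apply _ MeasurableSet.univ, Measure.restrict_univ,
        ← ofReal_integral_eq_lintegral_ofReal ((hqint x').div_const _)
          (Filter.Eventually.of_forall fun z =>
            div_nonneg (hσm.le.trans (hq_low z x')) (hCpos x').le)]
      rw [integral_div, div_self (ne_of_gt (hCpos x'))]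
      exact ENNReal.ofReal_one
    · refine ⟨filterDist μ q g ys ν i, hφ, ?_⟩
      intro x A hA
      rw [hBeq]
      rw [withDensity_apply _ hA]
      calc ENNReal.ofReal (σm / σp) * (filterDist μ q g ys ν i) A
          = ∫⁻ _z in A, ENNReal.ofReal (σm / σp) ∂(filterDist μ q g ys ν i) :=
            (setLIntegral_const _ _).symm
        _ ≤ _ := lintegral_mono fun z => hdlow x z
  · -- case i > n
    push_neg at hin
    haveI hφn : IsProbabilityMeasure (filterDist μ q g ys ν n) :=
      filter_prob μ ν hq hσm hq_low hq_up hg_meas hg_nonneg hg_bdd hg_pos h0 n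
    set j := i - n - 1 with hj
    have hij : i - n = j + 1 := by omega
    have hqpm := qpow_meas μ hq
    have hqpb := qpow_bounds μ hq hσm hq_low hq_up
    have hratio : (0:ℝ) ≤ σm / σp := div_nonneg hσm.le hσp.le
    have hsec1 : ∀ z, Measurable fun xn => qpowAux μ q j xn z :=
      fun z => (hqpm j).comp (measurable_id.prodMk measurable_const)
    have hsec2 : ∀ x', Measurable fun xn => qpowAux μ q (j+1) xn x' :=
      fun x' => (hqpm (j+1)).comp (measurable_id.prodMk measurable_const)
    have hsint1 : ∀ z, Integrable (fun xn => qpowAux μ q j xn z) (filterDist μ q g ys ν n) :=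
      fun z => integrable_of_bounds _ (hsec1 z) (σm^(j+1)) (σp^(j+1))
        (fun xn => (hqpb j xn z).1) (fun xn => (hqpb j xn z).2)
    have hsint2 : ∀ x', Integrable (fun xn => qpowAux μ q (j+1) xn x') (filterDist μ q g ys ν n) :=
      fun x' => integrable_of_bounds _ (hsec2 x') (σm^(j+2)) (σp^(j+2))
        (fun xn => (hqpb (j+1) xn x').1) (fun xn => (hqpb (j+1) xn x').2)
    have hHlow : ∀ z, σm ^ (j+1) ≤ ∫ xn, qpowAux μ q j xn z ∂(filterDist μ q g ys ν n) := by
      intro z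
      have : ∫ _xn : X, σm ^ (j+1) ∂(filterDist μ q g ys ν n)
          ≤ ∫ xn, qpowAux μ q j xn z ∂(filterDist μ q g ys ν n) :=
        integral_mono (integrable_const _) (hsint1 z) fun xn => (hqpb j xn z).1
      simpa [measure_univ] using this
    have hHup : ∀ z, (∫ xn, qpowAux μ q j xn z ∂(filterDist μ q g ys ν n)) ≤ σp ^ (j+1) := by
      intro z
      have : (∫ xn, qpowAux μ q j xn z ∂(filterDist μ q g ys ν n))
          ≤ ∫ _xn : X, σp ^ (j+1) ∂(filterDist μ q g ys ν n) :=
        integral_mono (hsint1 z) (integrable_const _) fun xn => (hqpb j xn z).2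
      simpa [measure_univ] using this
    have hHpos : ∀ z, 0 < ∫ xn, qpowAux μ q j xn z ∂(filterDist μ q g ys ν n) :=
      fun z => lt_of_lt_of_le (pow_pos hσm _) (hHlow z)
    have hHmeas : Measurable fun z => ∫ xn, qpowAux μ q j xn z ∂(filterDist μ q g ys ν n) := by
      have h1 : Measurable (Function.uncurry fun (z xn : X) => qpowAux μ q j xn z) :=
        (hqpm j).comp measurable_swap
      exact h1.stronglyMeasurable.integral_prod_right.measurable
    have hHint : Integrable
        (fun z => ∫ xn, qpowAux μ q j xn z ∂(filterDist μ q g ys ν n)) μ :=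
      integrable_of_bounds μ hHmeas (σm^(j+1)) (σp^(j+1)) hHlow hHup
    have hHIlow : σm ^ (j+1)
        ≤ ∫ z, (∫ xn, qpowAux μ q j xn z ∂(filterDist μ q g ys ν n)) ∂μ := by
      have : ∫ _z : X, σm ^ (j+1) ∂μ
          ≤ ∫ z, (∫ xn, qpowAux μ q j xn z ∂(filterDist μ q g ys ν n)) ∂μ :=
        integral_mono (integrable_const _) hHint hHlow
      simpa [measure_univ] using this
    have hHIpos : 0 < ∫ z, (∫ xn, qpowAux μ q j xn z ∂(filterDist μ q g ys ν n)) ∂μ :=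
      lt_of_lt_of_le (pow_pos hσm _) hHIlow
    have hqr := qpow_right μ hq hσm hq_low hq_up j
    have hD : ∀ x', (∫ xn, qpowAux μ q (j+1) xn x' ∂(filterDist μ q g ys ν n))
        = ∫ z, (∫ xn, qpowAux μ q j xn z ∂(filterDist μ q g ys ν n)) * q z x' ∂μ := by
      intro x'
      have h1 : (∫ xn, qpowAux μ q (j+1) xn x' ∂(filterDist μ q g ys ν n))
          = ∫ xn, ∫ z, qpowAux μ q j xn z * q z x' ∂μ ∂(filterDist μ q g ys ν n) := by
        congr 1
        funext xn
        exact hqr xn x'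
      rw [h1]
      have hmu : Measurable (Function.uncurry fun (xn z : X) => qpowAux μ q j xn z * q z x') :=
        (hqpm j).mul ((hqsec x').comp measurable_snd)
      have hbd : ∀ p : X × X,
          σm^(j+1) * σm ≤ qpowAux μ q j p.1 p.2 * q p.2 x'
          ∧ qpowAux μ q j p.1 p.2 * q p.2 x' ≤ σp^(j+1) * σp := fun p =>
        mul_mem_bounds (pow_pos hσm _) hσm (hqpb j p.1 p.2).1 (hqpb j p.1 p.2).2
          (hq_low p.2 x') (hq_up p.2 x')
      have hintu : Integrable (Function.uncurry fun (xn z : X) => qpowAux μ q j xn z * q z x')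
          ((filterDist μ q g ys ν n).prod μ) :=
        integrable_of_bounds _ hmu _ _ (fun p => (hbd p).1) (fun p => (hbd p).2)
      rw [integral_integral_swap hintu]
      congr 1
      funext z
      rw [integral_mul_const]
    have hDpos : ∀ x', 0 < ∫ xn, qpowAux μ q (j+1) xn x' ∂(filterDist μ q g ys ν n) := by
      intro x'
      have : ∫ _xn : X, σm ^ (j+2) ∂(filterDist μ q g ys ν n)
          ≤ ∫ xn, qpowAux μ q (j+1) xn x' ∂(filterDist μ q g ys ν n) :=
        integral_mono (integrable_const _) (hsint2 x') fun xn => (hqpb (j+1) xn x').1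
      have h2 : σm ^ (j+2) ≤ ∫ xn, qpowAux μ q (j+1) xn x' ∂(filterDist μ q g ys ν n) := by
        simpa [measure_univ] using this
      exact lt_of_lt_of_le (pow_pos hσm _) h2
    have hHq_int : ∀ x', Integrable
        (fun z => (∫ xn, qpowAux μ q j xn z ∂(filterDist μ q g ys ν n)) * q z x') μ := by
      intro x'
      refine integrable_of_bounds μ (hHmeas.mul (hqsec x')) (σm^(j+1) * σm) (σp^(j+1) * σp)
        (fun z => (mul_mem_bounds (pow_pos hσm _) hσm (hHlow z) (hHup z)
          (hq_low z x') (hq_up z x')).1)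
        (fun z => (mul_mem_bounds (pow_pos hσm _) hσm (hHlow z) (hHup z)
          (hq_low z x') (hq_up z x')).2)
    have hDup : ∀ x', (∫ xn, qpowAux μ q (j+1) xn x' ∂(filterDist μ q g ys ν n))
        ≤ σp * ∫ z, (∫ xn, qpowAux μ q j xn z ∂(filterDist μ q g ys ν n)) ∂μ := by
      intro x'
      rw [hD x']
      have h1 : (∫ z, (∫ xn, qpowAux μ q j xn z ∂(filterDist μ q g ys ν n)) * q z x' ∂μ)
          ≤ ∫ z, (∫ xn, qpowAux μ q j xn z ∂(filterDist μ q g ys ν n)) * σp ∂μ := by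
        refine integral_mono (hHq_int x') ?_ ?_
        · exact hHint.mul_const σp
        · intro z
          exact mul_le_mul_of_nonneg_left (hq_up z x') (hHpos z).le
      rw [integral_mul_const] at h1
      calc _ ≤ _ := h1
        _ = σp * ∫ z, (∫ xn, qpowAux μ q j xn z ∂(filterDist μ q g ys ν n)) ∂μ := mul_comm _ _
    have hDmeas : Measurable fun x' => ∫ xn, qpowAux μ q (j+1) xn x' ∂(filterDist μ q g ys ν n) := by
      have h1 : Measurable (Function.uncurry fun (x' xn : X) => qpowAux μ q (j+1) xn x') :=
        (hqpm (j+1)).comp measurable_swap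
      exact h1.stronglyMeasurable.integral_prod_right.measurable
    have hBeq : Bker μ q g ys ν n i = fun x' => μ.withDensity fun xk =>
        ENNReal.ofReal ((q xk x' * ∫ xn, qpowAux μ q j xn xk ∂(filterDist μ q g ys ν n)) /
          ∫ xn, qpowAux μ q (j+1) xn x' ∂(filterDist μ q g ys ν n)) := by
      funext x'
      simp only [Bker, if_neg (not_le.mpr hin)]
      rw [← hj, hij]
    refine ⟨?_, ?_, ?_⟩
    · rw [hBeq]
      apply measurable_withDensity_kernel
      exact (((hq.comp measurable_swap).mul (hHmeas.comp measurable_snd)).div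
        (hDmeas.comp measurable_fst)).ennreal_ofReal
    · intro x'
      constructor
      rw [hBeq]
      have hnum_int : Integrable (fun xk => q xk x'
          * ∫ xn, qpowAux μ q j xn xk ∂(filterDist μ q g ys ν n)) μ := by
        refine integrable_of_bounds μ ((hqsec x').mul hHmeas) (σm * σm^(j+1)) (σp * σp^(j+1))
          (fun z => (mul_mem_bounds hσm (pow_pos hσm _) (hq_low z x') (hq_up z x')
            (hHlow z) (hHup z)).1)
          (fun z => (mul_mem_bounds hσm (pow_pos hσm _) (hq_low z x') (hq_up z x')
            (hHlow z) (hHup z)).2)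
      rw [withDensity_apply _ MeasurableSet.univ, Measure.restrict_univ,
        ← ofReal_integral_eq_lintegral_ofReal (hnum_int.div_const _)
          (Filter.Eventually.of_forall fun z => div_nonneg
            (mul_nonneg (hσm.le.trans (hq_low z x')) (hHpos z).le) (hDpos x').le)]
      rw [integral_div]
      have hnum : (∫ xk, q xk x'
            * ∫ xn, qpowAux μ q j xn xk ∂(filterDist μ q g ys ν n) ∂μ)
          = ∫ xn, qpowAux μ q (j+1) xn x' ∂(filterDist μ q g ys ν n) := by
        rw [hD x']
        congr 1
        funext z
        ring
      rw [hnum, div_self (ne_of_gt (hDpos x'))]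
      exact ENNReal.ofReal_one
    · refine ⟨μ.withDensity fun z => ENNReal.ofReal
        ((∫ xn, qpowAux μ q j xn z ∂(filterDist μ q g ys ν n)) /
          ∫ z', (∫ xn, qpowAux μ q j xn z' ∂(filterDist μ q g ys ν n)) ∂μ), ?_, ?_⟩
      · constructor
        rw [withDensity_apply _ MeasurableSet.univ, Measure.restrict_univ,
          ← ofReal_integral_eq_lintegral_ofReal (hHint.div_const _)
            (Filter.Eventually.of_forall fun z => div_nonneg (hHpos z).le hHIpos.le)]
        rw [integral_div, div_self (ne_of_gt hHIpos)]
        exact ENNReal.ofReal_one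
      · intro x A hA
        rw [hBeq, withDensity_apply _ hA, withDensity_apply _ hA,
          ← lintegral_const_mul _ ((hHmeas.div_const _).ennreal_ofReal)]
        refine lintegral_mono fun z => ?_
        rw [← ENNReal.ofReal_mul hratio]
        apply ENNReal.ofReal_le_ofReal
        rw [div_mul_div_comm]
        refine div_le_div₀
          (mul_nonneg (hσm.le.trans (hq_low z x)) (hHpos z).le)
          (mul_le_mul_of_nonneg_right (hq_low z x) (hHpos z).le)
          (hDpos x) (hDup x)
end Bprops


lemma zero_withDensity (f : X → ENNReal) : (0 : Measure X).withDensity f = 0 := by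
  ext s hs
  rw [withDensity_apply _ hs]
  simp

lemma withDensity_zero_fun (μ : Measure X) : μ.withDensity (fun _ => (0:ENNReal)) = 0 := by
  have h : (fun _ : X => (0:ENNReal)) = 0 := rfl
  rw [h, withDensity_zero]

lemma ufilter_degenerate (μ : Measure X) (q : X → X → ℝ) (g : X → Y → ℝ) (ys : ℕ → Y)
    (ν : Measure X) (h0 : ufilter μ q g ys ν 0 Set.univ = 0) :
    ∀ k, ufilter μ q g ys ν k = 0 := by
  intro k
  induction k with
  | zero => exact Measure.measure_univ_eq_zero.mp h0
  | succ k ih =>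
    show μ.withDensity (fun x' => ENNReal.ofReal (g x' (ys (k + 1))) *
        ∫⁻ x, ENNReal.ofReal (q x x') ∂(ufilter μ q g ys ν k)) = 0
    rw [ih]
    simp only [lintegral_zero_measure, mul_zero]
    exact withDensity_zero_fun μ

lemma Bker_degenerate (μ : Measure X) (q : X → X → ℝ) (g : X → Y → ℝ) (ys : ℕ → Y)
    (ν : Measure X) (n : ℕ) (h0 : ufilter μ q g ys ν 0 Set.univ = 0) :
    ∀ i x', Bker μ q g ys ν n i x' = 0 := by
  have hfd : ∀ k, filterDist μ q g ys ν k = 0 := by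
    intro k
    simp [filterDist, ufilter_degenerate μ q g ys ν h0 k]
  intro i x'
  by_cases hin : i ≤ n
  · simp only [Bker, if_pos hin, hfd]
    exact zero_withDensity _
  · simp only [Bker, if_neg hin, hfd, integral_zero_measure, mul_zero, div_zero,
      ENNReal.ofReal_zero]
    exact withDensity_zero_fun μ

lemma kcompDown_degenerate (K : ℕ → X → Measure X) (hB : ∀ i x', K i x' = 0) (k : ℕ)
    (ν' : Measure X) : ∀ j, kcompDown K k ν' j = 0 := by
  intro j
  induction j with
  | zero =>
    show ν'.bind (K k) = 0
    have h : K k = 0 := funext fun x => hB k x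
    rw [h, Measure.bind_zero_right]
  | succ j ih =>
    show (kcompDown K k ν' j).bind (K (k - j - 1)) = 0
    rw [ih, Measure.bind_zero_left]

/-- **Theorem 3.1, backward part.** Assume (A1). Then for all `0 ≤ m ≤ k`, all
observations, every initial distribution `ν` and all probability measures
`ν₁, ν₂`, `‖ν₁ B_{ν,k|n} ⋯ B_{ν,m|n} − ν₂ B_{ν,k|n} ⋯ B_{ν,m|n}‖_TV ≤ ρ^(k−m+1)`
with `ρ = 1 − σ₋/σ₊`. -/
theorem backward_smoothing_kernel_forgetting
    (μ : Measure X) [IsProbabilityMeasure μ]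
    (q : X → X → ℝ) (g : X → Y → ℝ) (ys : ℕ → Y) (n : ℕ)
    (σm σp : ℝ)
    (hσm : 0 < σm)
    (hq_meas : Measurable (Function.uncurry q))
    (hq_low : ∀ a b, σm ≤ q a b) (hq_up : ∀ a b, q a b ≤ σp)
    (hg_meas : ∀ yv, Measurable fun x => g x yv)
    (hg_nonneg : ∀ x yv, 0 ≤ g x yv)
    (hg_bdd : ∀ yv, ∃ C, ∀ x, g x yv ≤ C)
    (hg_pos : ∀ yv, 0 < ∫ x, g x yv ∂μ)
    (ν : Measure X) [IsProbabilityMeasure ν]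
    (m k : ℕ) (hmk : m ≤ k)
    (ν₁ ν₂ : Measure X) [IsProbabilityMeasure ν₁] [IsProbabilityMeasure ν₂]
    (A : Set X) (hA : MeasurableSet A) :
    |(kcompDown (Bker μ q g ys ν n) k ν₁ (k - m) A).toReal -
        (kcompDown (Bker μ q g ys ν n) k ν₂ (k - m) A).toReal| ≤
      (1 - σm / σp) ^ (k - m + 1) := by
  have hX : Nonempty X := by
    by_contra h
    rw [not_nonempty_iff] at h
    have h1 : ν Set.univ = 1 := measure_univ
    rw [Set.univ_eq_empty_iff.mpr h] at h1
    simp at h1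
  obtain ⟨x0⟩ := hX
  have hσp : 0 < σp := hσm.trans_le ((hq_low x0 x0).trans (hq_up x0 x0))
  have hε0 : (0:ℝ) ≤ σm / σp := div_nonneg hσm.le hσp.le
  have hε1 : σm / σp ≤ 1 :=
    div_le_one_of_le₀ ((hq_low x0 x0).trans (hq_up x0 x0)) hσp.le
  by_cases h0 : ufilter μ q g ys ν 0 Set.univ = 0
  · have hz := kcompDown_degenerate (Bker μ q g ys ν n)
      (Bker_degenerate μ q g ys ν n h0) k
    rw [hz ν₁ (k - m), hz ν₂ (k - m)]
    simp only [Measure.coe_zero, Pi.zero_apply, ENNReal.toReal_zero, sub_self, abs_zero]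
    exact pow_nonneg (by linarith) _
  · have props := fun i => Bker_props μ ν n hq_meas hσm hq_low hq_up hg_meas hg_nonneg
      hg_bdd hg_pos h0 i
    have hK : ∀ i, Measurable (Bker μ q g ys ν n i) := fun i => (props i).1
    have hKp : ∀ i x, IsProbabilityMeasure (Bker μ q g ys ν n i x) := fun i x => (props i).2.1 x
    choose lam hlamp hlammin using fun i => (props i).2.2
    exact tv_chain (Bker μ q g ys ν n) hK hKp lam hlamp hε0 hε1 hlammin k ν₁ ν₂ (k - m) A hA

end
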